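/- Let n ∈ ℝ with n ≠ 0 and n ≠ −1, let c₁, c₂ ∈ ℝ, and let φ : J → (0,∞) be differentiable on an open interval J ⊆ ℝ with φ(ω)ⁿ ≠ 1 for all ω ∈ J and satisfying the implicit relation φ(ω)^{n+1}/(n+1) − φ(ω) = c₁ω + c₂ for all ω ∈ J. Then φ'(ω)·(φ(ω)ⁿ − 1) = c₁ on J; moreover φ is twice differentiable and satisfies the reduced ODE (25) on J with r = 0 and p = 0. -/

import Mathlib

open Real Set

noncomputable section

/-- The reduced ODE (25):
`[(4r² − p)n² + 4(2n+1)r²]φ^{n+1} + 4n(n+1)[nφ'' − 2(n+1)rφ']φⁿ + 4n³(n+1)(φ')²φ^{n−1}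
 − 4n²(n+1)φ'' = 0`, for a positive function `φ` with first and second derivatives
`φ'`, `φ''`. -/
def ODE25 (n r p : ℝ) (φ φ' φ'' : ℝ → ℝ) (ω : ℝ) : Prop :=
  ((4 * r ^ 2 - p) * n ^ 2 + 4 * (2 * n + 1) * r ^ 2) * φ ω ^ (n + 1)
    + 4 * n * (n + 1) * (n * φ'' ω - 2 * (n + 1) * r * φ' ω) * φ ω ^ n
    + 4 * n ^ 3 * (n + 1) * (φ' ω) ^ 2 * φ ω ^ (n - 1)
    - 4 * n ^ 2 * (n + 1) * φ'' ω = 0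

/-- formula (29). If `φ^{n+1}/(n+1) − φ = c₁ω + c₂` with `φⁿ ≠ 1`, then
`φ'(φⁿ − 1) = c₁`, and `φ` is twice differentiable and satisfies the reduced ODE (25)
with `r = 0` and `p = 0`. -/
theorem implicit_solution_r_zero
    (n : ℝ) (hn : n ≠ 0) (hn1 : n ≠ -1) (c₁ c₂ : ℝ)
    (J : Set ℝ) (hJ : IsOpen J) (hJc : J.OrdConnected)
    (φ φ' : ℝ → ℝ) (hφpos : ∀ ω ∈ J, 0 < φ ω)
    (hd1 : ∀ ω ∈ J, HasDerivAt φ (φ' ω) ω)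
    (hne : ∀ ω ∈ J, φ ω ^ n ≠ 1)
    (hrel : ∀ ω ∈ J, φ ω ^ (n + 1) / (n + 1) - φ ω = c₁ * ω + c₂) :
    (∀ ω ∈ J, φ' ω * (φ ω ^ n - 1) = c₁)
    ∧ ∃ φ'' : ℝ → ℝ, (∀ ω ∈ J, HasDerivAt φ' (φ'' ω) ω)
        ∧ ∀ ω ∈ J, ODE25 n 0 0 φ φ' φ'' ω := by
  have hn1' : n + 1 ≠ 0 := fun h => hn1 (by linarith)
  -- Part 1
  have key : ∀ ω ∈ J, φ' ω * (φ ω ^ n - 1) = c₁ := by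
    intro ω hω
    have hG : HasDerivAt (fun x => φ x ^ (n + 1) / (n + 1) - φ x - (c₁ * x + c₂))
        (φ' ω * (φ ω ^ n - 1) - c₁) ω := by
      have h1 : HasDerivAt (fun x => φ x ^ (n + 1) / (n + 1))
          ((φ' ω * (n + 1) * φ ω ^ (n + 1 - 1)) / (n + 1)) ω :=
        ((hd1 ω hω).rpow_const (Or.inl (hφpos ω hω).ne')).div_const (n + 1)
      have h2 : HasDerivAt (fun x : ℝ => c₁ * x + c₂) c₁ ω := by
        simpa using ((hasDerivAt_id ω).const_mul c₁).add_const c₂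
      have := (h1.sub (hd1 ω hω)).sub h2
      refine this.congr_deriv ?_
      have : n + 1 - 1 = n := by ring
      rw [this]
      field_simp
    have hzero : HasDerivAt (fun x => φ x ^ (n + 1) / (n + 1) - φ x - (c₁ * x + c₂))
        (0 : ℝ) ω := by
      have hEq : (fun x => φ x ^ (n + 1) / (n + 1) - φ x - (c₁ * x + c₂))
          =ᶠ[nhds ω] (fun _ => (0 : ℝ)) := by
        filter_upwards [hJ.mem_nhds hω] with x hx
        rw [hrel x hx]; ring
      exact (hasDerivAt_const ω (0 : ℝ)).congr_of_eventuallyEq hEq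
    have := hG.unique hzero
    linarith
  refine ⟨key, ?_⟩
  set φ'' : ℝ → ℝ := fun ω => -(c₁ * (n * φ ω ^ (n - 1) * φ' ω)) / (φ ω ^ n - 1) ^ 2
    with hφ''
  have hD : ∀ ω ∈ J, φ ω ^ n - 1 ≠ 0 := fun ω hω => sub_ne_zero.2 (hne ω hω)
  have hφ' : ∀ ω ∈ J, φ' ω = c₁ / (φ ω ^ n - 1) := by
    intro ω hω
    field_simp [hD ω hω]
    exact key ω hω
  have hd2 : ∀ ω ∈ J, HasDerivAt φ' (φ'' ω) ω := by
    intro ω hω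
    have hden : HasDerivAt (fun x => φ x ^ n - 1) (φ' ω * n * φ ω ^ (n - 1)) ω :=
      ((hd1 ω hω).rpow_const (Or.inl (hφpos ω hω).ne')).sub_const 1
    have hg : HasDerivAt (fun x => c₁ / (φ x ^ n - 1))
        ((0 * (φ ω ^ n - 1) - c₁ * (φ' ω * n * φ ω ^ (n - 1))) / (φ ω ^ n - 1) ^ 2) ω :=
      (hasDerivAt_const ω c₁).div hden (hD ω hω)
    have hEq : φ' =ᶠ[nhds ω] (fun x => c₁ / (φ x ^ n - 1)) := by
      filter_upwards [hJ.mem_nhds hω] with x hx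
      exact hφ' x hx
    have := hg.congr_of_eventuallyEq hEq
    refine this.congr_deriv ?_
    rw [hφ'']
    ring_nf
  refine ⟨φ'', hd2, ?_⟩
  intro ω hω
  unfold ODE25
  have h1 : φ'' ω * (φ ω ^ n - 1) + n * φ ω ^ (n - 1) * (φ' ω) ^ 2 = 0 := by
    rw [hφ'']
    simp only
    field_simp [hD ω hω]
    linear_combination (n * φ ω ^ (n - 1) * φ' ω) * (key ω hω)
  linear_combination 4 * n ^ 2 * (n + 1) * h1


end
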